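/- arXiv:1909.08739 — 2 statements merged into one kernel-verified Lean document; each statement's English description precedes it below -/
import Mathlib

section
/- Suppose V : ℝ → ℝ extends to a function analytic on an open set D ⊆ ℂ containing ℝ which is real-valued on ℝ, let V₀ := sup_{x∈ℝ} |V(x)|, fix μ₀ with 0 < μ₀ < V₀ and limsup_{|x|→∞} |V(x)| < μ₀, assume V is a double-lobe potential near μ₀, and assume V is odd: V(−x) = −V(x) for all x ∈ ℝ. Then there exist positive constants h₀ and ε such that for every h with 0 < h ≤ h₀, no eigenvalue λ of P(h) satisfying |λ − i·μ₀| < ε is purely imaginary; that is, every such eigenvalue has Re λ ≠ 0. -/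
open Complex MeasureTheory ComplexConjugate

noncomputable section

/-- Auxiliary key lemma: for an odd real potential, the Zakharov–Shabat system with a
*real* "eigenvalue parameter" `μ` (i.e. purely imaginary spectral parameter `iμ`) has no
nontrivial square-integrable solution. -/
theorem dirac_odd_aux (V : ℝ → ℝ) (hodd : ∀ x : ℝ, V (-x) = -V x)
    (h : ℝ) (hh : 0 < h) (μ : ℝ)
    (u₁ u₂ : ℝ → ℂ) (hu₁d : Differentiable ℝ u₁) (hu₂d : Differentiable ℝ u₂)
    (hu₁L : MemLp u₁ 2 volume) (hu₂L : MemLp u₂ 2 volume)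
    (e1 : ∀ x : ℝ, (h : ℂ) * deriv u₁ x = (μ : ℂ) * u₁ x - (V x : ℂ) * u₂ x)
    (e2 : ∀ x : ℝ, (h : ℂ) * deriv u₂ x = (V x : ℂ) * u₁ x - (μ : ℂ) * u₂ x)
    (x₀ : ℝ) (hx₀ : u₁ x₀ ≠ 0 ∨ u₂ x₀ ≠ 0) : False := by
  have hhc : (h : ℂ) ≠ 0 := Complex.ofReal_ne_zero.mpr hh.ne'
  -- conjugated equations
  have ce1 : ∀ x : ℝ, (h : ℂ) * conj (deriv u₁ x)
      = (μ : ℂ) * conj (u₁ x) - (V x : ℂ) * conj (u₂ x) := by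
    intro x
    have t := congrArg (starRingEnd ℂ) (e1 x)
    simpa [map_mul, map_sub, Complex.conj_ofReal] using t
  have ce2 : ∀ x : ℝ, (h : ℂ) * conj (deriv u₂ x)
      = (V x : ℂ) * conj (u₁ x) - (μ : ℂ) * conj (u₂ x) := by
    intro x
    have t := congrArg (starRingEnd ℂ) (e2 x)
    simpa [map_mul, map_sub, Complex.conj_ofReal] using t
  -- the conserved "cross" quantity
  set Q : ℝ → ℂ := fun x => u₁ x * conj (u₁ (-x)) + u₂ x * conj (u₂ (-x)) with hQdef
  have hru₁ : ∀ x : ℝ, HasDerivAt (fun y : ℝ => u₁ (-y)) (-deriv u₁ (-x)) x := by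
    intro x
    have := ((hu₁d (-x)).hasDerivAt).scomp x (hasDerivAt_neg x)
    simpa [Function.comp_def] using this
  have hru₂ : ∀ x : ℝ, HasDerivAt (fun y : ℝ => u₂ (-y)) (-deriv u₂ (-x)) x := by
    intro x
    have := ((hu₂d (-x)).hasDerivAt).scomp x (hasDerivAt_neg x)
    simpa [Function.comp_def] using this
  have hc1 : ∀ x : ℝ, HasDerivAt (fun y : ℝ => conj (u₁ (-y))) (-conj (deriv u₁ (-x))) x := by
    intro x
    have := (hru₁ x).star
    simpa [Complex.star_def] using this
  have hc2 : ∀ x : ℝ, HasDerivAt (fun y : ℝ => conj (u₂ (-y))) (-conj (deriv u₂ (-x))) x := by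
    intro x
    have := (hru₂ x).star
    simpa [Complex.star_def] using this
  have hQ0 : ∀ x : ℝ, HasDerivAt Q 0 x := by
    intro x
    have hce1m : (h : ℂ) * conj (deriv u₁ (-x))
        = (μ : ℂ) * conj (u₁ (-x)) + (V x : ℂ) * conj (u₂ (-x)) := by
      have t := ce1 (-x)
      rw [hodd x] at t
      push_cast at t
      linear_combination t
    have hce2m : (h : ℂ) * conj (deriv u₂ (-x))
        = -(V x : ℂ) * conj (u₁ (-x)) - (μ : ℂ) * conj (u₂ (-x)) := by
      have t := ce2 (-x)
      rw [hodd x] at t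
      push_cast at t
      linear_combination t
    have H : HasDerivAt Q
        (deriv u₁ x * conj (u₁ (-x)) + u₁ x * -conj (deriv u₁ (-x))
          + (deriv u₂ x * conj (u₂ (-x)) + u₂ x * -conj (deriv u₂ (-x)))) x :=
      (((hu₁d x).hasDerivAt.mul (hc1 x)).add ((hu₂d x).hasDerivAt.mul (hc2 x)))
    refine H.congr_deriv ?_
    have hmul : (h : ℂ) * (deriv u₁ x * conj (u₁ (-x)) + u₁ x * -conj (deriv u₁ (-x))
          + (deriv u₂ x * conj (u₂ (-x)) + u₂ x * -conj (deriv u₂ (-x)))) = 0 := by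
      linear_combination conj (u₁ (-x)) * e1 x - u₁ x * hce1m
        + conj (u₂ (-x)) * e2 x - u₂ x * hce2m
    exact (mul_eq_zero.mp hmul).resolve_left hhc
  -- Q is constant
  have hQc : ∀ x : ℝ, Q x = Q 0 := fun x =>
    is_const_of_deriv_eq_zero (fun y => (hQ0 y).differentiableAt)
      (fun y => (hQ0 y).deriv) x 0
  -- Q is (bounded by) an integrable function, hence the constant is 0
  have hmp : MeasurePreserving (fun x : ℝ => -x) volume volume :=
    Measure.measurePreserving_neg volume
  have i1 : Integrable (fun x : ℝ => ‖u₁ x‖ ^ 2) volume := (hu₁L.norm).integrable_sq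
  have i2 : Integrable (fun x : ℝ => ‖u₂ x‖ ^ 2) volume := (hu₂L.norm).integrable_sq
  have i1m : Integrable (fun x : ℝ => ‖u₁ (-x)‖ ^ 2) volume := by
    have := ((hu₁L.comp_measurePreserving hmp).norm).integrable_sq
    simpa [Function.comp] using this
  have i2m : Integrable (fun x : ℝ => ‖u₂ (-x)‖ ^ 2) volume := by
    have := ((hu₂L.comp_measurePreserving hmp).norm).integrable_sq
    simpa [Function.comp] using this
  have hg : Integrable
      (fun x : ℝ => (‖u₁ x‖ ^ 2 + ‖u₁ (-x)‖ ^ 2 + ‖u₂ x‖ ^ 2 + ‖u₂ (-x)‖ ^ 2) / 2) volume :=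
    (((i1.add i1m).add i2).add i2m).div_const 2
  have hconst : Integrable (fun _ : ℝ => Q 0) volume := by
    refine hg.mono' aestronglyMeasurable_const ?_
    filter_upwards with x
    rw [← hQc x]
    have hb1 : ‖Q x‖ ≤ ‖u₁ x‖ * ‖u₁ (-x)‖ + ‖u₂ x‖ * ‖u₂ (-x)‖ := by
      refine (norm_add_le _ _).trans ?_
      simp [norm_mul]
    refine hb1.trans ?_
    nlinarith [sq_nonneg (‖u₁ x‖ - ‖u₁ (-x)‖), sq_nonneg (‖u₂ x‖ - ‖u₂ (-x)‖)]
  have hQzero : Q 0 = 0 := by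
    rcases integrable_const_iff.mp hconst with h0 | hfin
    · exact h0
    · exact absurd (measure_lt_top (volume : Measure ℝ) Set.univ) (by simp [Real.volume_univ])
  -- hence u vanishes at 0
  have hQ0val : Q 0 = ((normSq (u₁ 0) + normSq (u₂ 0) : ℝ) : ℂ) := by
    simp only [hQdef, neg_zero, Complex.mul_conj]
    push_cast
    ring
  have hsum : normSq (u₁ 0) + normSq (u₂ 0) = 0 := by
    have := hQ0val ▸ hQzero
    exact_mod_cast this
  have h10 : u₁ 0 = 0 := by
    have n1 := Complex.normSq_nonneg (u₁ 0)
    have n2 := Complex.normSq_nonneg (u₂ 0)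
    exact Complex.normSq_eq_zero.mp (by linarith)
  have h20 : u₂ 0 = 0 := by
    have n1 := Complex.normSq_nonneg (u₁ 0)
    have n2 := Complex.normSq_nonneg (u₂ 0)
    exact Complex.normSq_eq_zero.mp (by linarith)
  -- Gronwall-type argument: N vanishes identically
  set N : ℝ → ℝ := fun x => normSq (u₁ x) + normSq (u₂ x) with hNdef
  set S : ℝ → ℂ := fun x => deriv u₁ x * conj (u₁ x) + u₁ x * conj (deriv u₁ x)
      + (deriv u₂ x * conj (u₂ x) + u₂ x * conj (deriv u₂ x)) with hSdef
  have hcc1 : ∀ x : ℝ, HasDerivAt (fun y : ℝ => conj (u₁ y)) (conj (deriv u₁ x)) x := by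
    intro x
    have := ((hu₁d x).hasDerivAt).star
    simpa [Complex.star_def] using this
  have hcc2 : ∀ x : ℝ, HasDerivAt (fun y : ℝ => conj (u₂ y)) (conj (deriv u₂ x)) x := by
    intro x
    have := ((hu₂d x).hasDerivAt).star
    simpa [Complex.star_def] using this
  have hM : ∀ x : ℝ, HasDerivAt (fun y : ℝ => u₁ y * conj (u₁ y) + u₂ y * conj (u₂ y)) (S x) x :=
    fun x => (((hu₁d x).hasDerivAt.mul (hcc1 x)).add ((hu₂d x).hasDerivAt.mul (hcc2 x)))
  have hNeq : N = fun y : ℝ => (u₁ y * conj (u₁ y) + u₂ y * conj (u₂ y)).re := by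
    funext y
    simp [hNdef, Complex.mul_conj]
  have hN : ∀ x : ℝ, HasDerivAt N ((S x).re) x := by
    intro x
    rw [hNeq]
    have := Complex.reCLM.hasFDerivAt.comp_hasDerivAt x (hM x)
    simpa only [Function.comp_def, Complex.reCLM_apply] using this
  have hS : ∀ x : ℝ, (h : ℂ) * S x = ((2 * μ * (normSq (u₁ x) - normSq (u₂ x)) : ℝ) : ℂ) := by
    intro x
    have ha := Complex.mul_conj (u₁ x)
    have hb := Complex.mul_conj (u₂ x)
    push_cast
    linear_combination conj (u₁ x) * e1 x + u₁ x * ce1 x + conj (u₂ x) * e2 x + u₂ x * ce2 x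
      + 2 * (μ : ℂ) * ha - 2 * (μ : ℂ) * hb
  have hNd : Differentiable ℝ N := fun x => (hN x).differentiableAt
  set K : ℝ := 2 * |μ| / h with hKdef
  have hK : 0 ≤ K := by positivity
  have hbound : ∀ x : ℝ, |deriv N x| ≤ K * N x := by
    intro x
    rw [(hN x).deriv]
    have h1 : ‖(h : ℂ) * S x‖ = |2 * μ * (normSq (u₁ x) - normSq (u₂ x))| := by
      rw [hS x]; exact (Complex.norm_real _).trans (Real.norm_eq_abs _)
    have h2 : ‖(h : ℂ) * S x‖ = h * ‖S x‖ := by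
      rw [norm_mul, Complex.norm_real, Real.norm_eq_abs, abs_of_pos hh]
    have h3 : |(S x).re| ≤ ‖S x‖ := Complex.abs_re_le_norm _
    have habs : |2 * μ * (normSq (u₁ x) - normSq (u₂ x))|
        ≤ 2 * |μ| * (normSq (u₁ x) + normSq (u₂ x)) := by
      have n1 := Complex.normSq_nonneg (u₁ x)
      have n2 := Complex.normSq_nonneg (u₂ x)
      rw [abs_mul, abs_mul, _root_.abs_two]
      have hd : |normSq (u₁ x) - normSq (u₂ x)| ≤ normSq (u₁ x) + normSq (u₂ x) :=
        abs_le.mpr ⟨by linarith, by linarith⟩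
      have := abs_nonneg μ
      nlinarith
    have h4 : h * ‖S x‖ ≤ 2 * |μ| * (normSq (u₁ x) + normSq (u₂ x)) := by
      rw [← h2, h1]; exact habs
    have h5 : ‖S x‖ ≤ K * N x := by
      rw [hKdef, hNdef]
      rw [div_mul_eq_mul_div, le_div_iff₀ hh]
      calc ‖S x‖ * h = h * ‖S x‖ := by ring
        _ ≤ _ := h4
    exact h3.trans h5
  have hNnonneg : ∀ x : ℝ, 0 ≤ N x := fun x =>
    add_nonneg (Complex.normSq_nonneg _) (Complex.normSq_nonneg _)
  have hN0 : N 0 = 0 := by simp [hNdef, h10, h20]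
  -- exponential weighting
  have hFe : ∀ (c : ℝ) (x : ℝ),
      HasDerivAt (fun y : ℝ => Real.exp (c * y)) (c * Real.exp (c * x)) x := by
    intro c x
    have h1 : HasDerivAt (fun y : ℝ => c * y) c x := by
      simpa using (hasDerivAt_id x).const_mul c
    simpa [mul_comm, Function.comp_def] using (Real.hasDerivAt_exp (c * x)).comp x h1
  have hNx₀ : 0 < N x₀ := by
    rcases hx₀ with hx | hx
    · have := Complex.normSq_pos.mpr hx
      have := Complex.normSq_nonneg (u₂ x₀)
      rw [hNdef]; dsimp only; linarith
    · have := Complex.normSq_pos.mpr hx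
      have := Complex.normSq_nonneg (u₁ x₀)
      rw [hNdef]; dsimp only; linarith
  rcases le_or_gt 0 x₀ with hx₀pos | hx₀neg
  · -- use F y = N y * exp (-K y), antitone
    set F : ℝ → ℝ := fun y => N y * Real.exp (-K * y) with hFdef
    have hF : ∀ x : ℝ, HasDerivAt F
        (deriv N x * Real.exp (-K * x) + N x * (-K * Real.exp (-K * x))) x :=
      fun x => ((hNd x).hasDerivAt.mul (hFe (-K) x))
    have hFd : Differentiable ℝ F := fun x => (hF x).differentiableAt
    have hF' : ∀ x : ℝ, deriv F x ≤ 0 := by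
      intro x
      rw [(hF x).deriv]
      have hb := le_of_abs_le (hbound x)
      have he := Real.exp_pos (-K * x)
      nlinarith
    have : F x₀ ≤ F 0 := antitone_of_deriv_nonpos hFd hF' hx₀pos
    rw [hFdef] at this
    simp only [hN0, zero_mul] at this
    have he := Real.exp_pos (-K * x₀)
    nlinarith
  · -- use G y = N y * exp (K y), monotone
    set G : ℝ → ℝ := fun y => N y * Real.exp (K * y) with hGdef
    have hG : ∀ x : ℝ, HasDerivAt G
        (deriv N x * Real.exp (K * x) + N x * (K * Real.exp (K * x))) x :=
      fun x => ((hNd x).hasDerivAt.mul (hFe K x))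
    have hGd : Differentiable ℝ G := fun x => (hG x).differentiableAt
    have hG' : ∀ x : ℝ, 0 ≤ deriv G x := by
      intro x
      rw [(hG x).deriv]
      have hb := neg_abs_le (deriv N x)
      have hb2 := le_of_abs_le (hbound x)
      have hb3 : -(K * N x) ≤ deriv N x := by
        have := neg_le_of_abs_le (hbound x); linarith
      have he := Real.exp_pos (K * x)
      nlinarith
    have : G x₀ ≤ G 0 := monotone_of_deriv_nonneg hGd hG' hx₀neg.le
    rw [hGdef] at this
    simp only [hN0, zero_mul] at this
    have he := Real.exp_pos (K * x₀)
    nlinarith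

/-- `lam` is an eigenvalue of the semiclassical Dirac (Zakharov–Shabat) operator `P(h)`
with potential `V`: there is a differentiable, not identically vanishing, square-integrable
solution `(u₁, u₂)` of the eigenvalue system. -/
def IsDiracEigenvalue (V : ℝ → ℝ) (h : ℝ) (lam : ℂ) : Prop :=
  ∃ u₁ u₂ : ℝ → ℂ,
    Differentiable ℝ u₁ ∧ Differentiable ℝ u₂ ∧
    (∃ x : ℝ, u₁ x ≠ 0 ∨ u₂ x ≠ 0) ∧
    MemLp u₁ 2 volume ∧ MemLp u₂ 2 volume ∧
    (∀ x : ℝ,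
      Complex.I * (h : ℂ) * deriv u₁ x + Complex.I * (V x : ℂ) * u₂ x = lam * u₁ x) ∧
    (∀ x : ℝ,
      Complex.I * (V x : ℂ) * u₁ x - Complex.I * (h : ℂ) * deriv u₂ x = lam * u₂ x)

/-- For an odd double-lobe potential near `μ₀`, no eigenvalue of
`P(h)` in a small disk around `i·μ₀` is purely imaginary, provided `h` is small enough. -/
theorem double_lobe_odd_no_purely_imaginary_eigenvalues
    (V : ℝ → ℝ) (D : Set ℂ) (Vc : ℂ → ℂ)
    (hD : IsOpen D) (hRD : ∀ x : ℝ, (x : ℂ) ∈ D)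
    (hVc : DifferentiableOn ℂ Vc D) (hext : ∀ x : ℝ, Vc x = (V x : ℂ))
    (μ₀ : ℝ) (hμ₀ : 0 < μ₀) (hμ₀V : μ₀ < ⨆ x : ℝ, |V x|)
    (hlim : ∃ R m : ℝ, m < μ₀ ∧ ∀ x : ℝ, R ≤ |x| → |V x| ≤ m)
    (αl βl βr αr : ℝ) (hord : αl < βl ∧ βl < βr ∧ βr < αr)
    (hset : {x : ℝ | (V x) ^ 2 = μ₀ ^ 2} = {αl, βl, βr, αr})
    (hdαl : deriv V αl ≠ 0) (hdβl : deriv V βl ≠ 0)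
    (hdβr : deriv V βr ≠ 0) (hdαr : deriv V αr ≠ 0)
    (hodd : ∀ x : ℝ, V (-x) = -V x) :
    ∃ h₀ ε : ℝ, 0 < h₀ ∧ 0 < ε ∧
      ∀ h : ℝ, 0 < h → h ≤ h₀ →
        ∀ lam : ℂ, IsDiracEigenvalue V h lam →
          ‖lam - Complex.I * (μ₀ : ℂ)‖ < ε → lam.re ≠ 0 := by
  refine ⟨1, 1, one_pos, one_pos, ?_⟩
  intro h hh _ lam hev _ hre
  obtain ⟨u₁, u₂, hd1, hd2, ⟨x₀, hx₀⟩, hL1, hL2, heq1, heq2⟩ := hev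
  set μ : ℝ := lam.im with hμdef
  have hlam : lam = Complex.I * (μ : ℂ) := by
    apply Complex.ext <;> simp [hre, hμdef]
  have e1 : ∀ x : ℝ, (h : ℂ) * deriv u₁ x = (μ : ℂ) * u₁ x - (V x : ℂ) * u₂ x := by
    intro x
    have t := heq1 x
    rw [hlam] at t
    have t2 : Complex.I * ((h : ℂ) * deriv u₁ x - ((μ : ℂ) * u₁ x - (V x : ℂ) * u₂ x)) = 0 := by
      linear_combination t
    exact sub_eq_zero.mp ((mul_eq_zero.mp t2).resolve_left Complex.I_ne_zero)
  have e2 : ∀ x : ℝ, (h : ℂ) * deriv u₂ x = (V x : ℂ) * u₁ x - (μ : ℂ) * u₂ x := by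
    intro x
    have t := heq2 x
    rw [hlam] at t
    have t2 : Complex.I * ((h : ℂ) * deriv u₂ x - ((V x : ℂ) * u₁ x - (μ : ℂ) * u₂ x)) = 0 := by
      linear_combination -t
    exact sub_eq_zero.mp ((mul_eq_zero.mp t2).resolve_left Complex.I_ne_zero)
  exact dirac_odd_aux V hodd h hh μ u₁ u₂ hd1 hd2 hL1 hL2 e1 e2 x₀ hx₀
end
end

section
/- Let V : ℝ → ℝ be continuously differentiable, let μ₀ > 0, let δ > 0, and suppose α, β : (μ₀ − δ, μ₀ + δ) → ℝ are differentiable functions with α(μ) < β(μ), V(α(μ))² = μ², V(β(μ))² = μ², V'(α(μ)) ≠ 0, V'(β(μ)) ≠ 0, and V(t)² − μ² > 0 for all t ∈ (α(μ), β(μ)), for every μ ∈ (μ₀ − δ, μ₀ + δ). Then the improper integral ∫_{α(μ₀)}^{β(μ₀)} (V(t)² − μ₀²)^{−1/2} dt converges, and the function F(μ) := ∫_{α(μ)}^{β(μ)} √(V(t)² − μ²) dt is differentiable at μ₀ with F'(μ₀) = −μ₀ · ∫_{α(μ₀)}^{β(μ₀)} (V(t)² − μ₀²)^{−1/2} dt;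 in particular F'(μ₀) < 0. -/
open Set MeasureTheory Filter


open Set

lemma sqrt_sub_sqrt_abs_le {a b : ℝ} (hb : 0 < b) :
    |Real.sqrt a - Real.sqrt b| ≤ |a - b| / Real.sqrt b := by
  have hsb : 0 < Real.sqrt b := Real.sqrt_pos.2 hb
  have hb' : Real.sqrt b * Real.sqrt b = b := Real.mul_self_sqrt hb.le
  rw [le_div_iff₀ hsb]
  rcases le_or_gt a 0 with ha | ha
  · have h0 : Real.sqrt a = 0 := Real.sqrt_eq_zero'.2 ha
    rw [h0]
    rw [abs_of_nonpos (by linarith), abs_of_nonpos (by linarith)]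
    nlinarith
  · have ha' : Real.sqrt a * Real.sqrt a = a := Real.mul_self_sqrt ha.le
    have hsa : 0 ≤ Real.sqrt a := Real.sqrt_nonneg a
    rcases abs_cases (Real.sqrt a - Real.sqrt b) with ⟨h1, _⟩ | ⟨h1, _⟩ <;>
      rcases abs_cases (a - b) with ⟨h2, _⟩ | ⟨h2, _⟩ <;> rw [h1, h2] <;> nlinarith

lemma integrableOn_inv_sqrt_left {q : ℝ → ℝ} (hq : Continuous q) {a c d : ℝ}
    (hac : a ≤ c) (hd : 0 < d) (hlb : ∀ t ∈ Ioc a c, d * (t - a) ≤ q t) :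
    IntegrableOn (fun t => (Real.sqrt (q t))⁻¹) (Ioc a c) := by
  have h1 : IntervalIntegrable (fun x : ℝ => x ^ (-(1/2) : ℝ)) MeasureTheory.volume 0 (c - a) :=
    intervalIntegral.intervalIntegrable_rpow' (by norm_num)
  have h2 := (h1.comp_sub_right a).const_mul (Real.sqrt d)⁻¹
  rw [zero_add, sub_add_cancel] at h2
  have h3 : IntegrableOn (fun x : ℝ => (Real.sqrt d)⁻¹ * (x - a) ^ (-(1/2) : ℝ)) (Ioc a c) :=
    (intervalIntegrable_iff_integrableOn_Ioc_of_le hac).1 h2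
  apply Integrable.mono' h3
  · exact ((Real.continuous_sqrt.comp hq).measurable.inv).aestronglyMeasurable
  · refine (ae_restrict_iff' measurableSet_Ioc).2 (Filter.Eventually.of_forall fun t ht => ?_)
    have hta : 0 < t - a := sub_pos.2 ht.1
    have hqt : 0 < q t := lt_of_lt_of_le (by positivity) (hlb t ht)
    have hle : Real.sqrt (d * (t - a)) ≤ Real.sqrt (q t) := Real.sqrt_le_sqrt (hlb t ht)
    have hpos : 0 < Real.sqrt (d * (t - a)) := Real.sqrt_pos.2 (by positivity)
    have key : (Real.sqrt (q t))⁻¹ ≤ (Real.sqrt (d * (t - a)))⁻¹ :=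
      inv_anti₀ hpos hle
    have heq : (Real.sqrt (d * (t - a)))⁻¹ = (Real.sqrt d)⁻¹ * (t - a) ^ (-(1/2) : ℝ) := by
      rw [Real.sqrt_mul hd.le, mul_inv, Real.rpow_neg hta.le, Real.sqrt_eq_rpow,
        Real.sqrt_eq_rpow]
    rw [Real.norm_eq_abs, abs_of_nonneg (by positivity)]
    rw [heq] at key; exact key

lemma integrableOn_inv_sqrt_right {q : ℝ → ℝ} (hq : Continuous q) {c b e : ℝ}
    (hcb : c ≤ b) (he : 0 < e) (hlb : ∀ t ∈ Ico c b, e * (b - t) ≤ q t) :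
    IntegrableOn (fun t => (Real.sqrt (q t))⁻¹) (Ico c b) := by
  have h1 : IntervalIntegrable (fun x : ℝ => x ^ (-(1/2) : ℝ)) MeasureTheory.volume 0 (b - c) :=
    intervalIntegral.intervalIntegrable_rpow' (by norm_num)
  have h2 := ((h1.comp_sub_left b).const_mul (Real.sqrt e)⁻¹).symm
  rw [sub_zero, sub_sub_cancel] at h2
  have h3 : IntegrableOn (fun x : ℝ => (Real.sqrt e)⁻¹ * (b - x) ^ (-(1/2) : ℝ)) (Ioc c b) :=
    (intervalIntegrable_iff_integrableOn_Ioc_of_le hcb).1 h2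
  have h4 : IntegrableOn (fun x : ℝ => (Real.sqrt e)⁻¹ * (b - x) ^ (-(1/2) : ℝ)) (Ico c b) := by
    rw [integrableOn_Ico_iff_integrableOn_Ioo]
    exact h3.mono_set Ioo_subset_Ioc_self
  apply Integrable.mono' h4
  · exact ((Real.continuous_sqrt.comp hq).measurable.inv).aestronglyMeasurable
  · refine (ae_restrict_iff' measurableSet_Ico).2 (Filter.Eventually.of_forall fun t ht => ?_)
    have hta : 0 < b - t := sub_pos.2 ht.2
    have hqt : 0 < q t := lt_of_lt_of_le (by positivity) (hlb t ht)
    have hle : Real.sqrt (e * (b - t)) ≤ Real.sqrt (q t) := Real.sqrt_le_sqrt (hlb t ht)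
    have hpos : 0 < Real.sqrt (e * (b - t)) := Real.sqrt_pos.2 (by positivity)
    have key : (Real.sqrt (q t))⁻¹ ≤ (Real.sqrt (e * (b - t)))⁻¹ :=
      inv_anti₀ hpos hle
    have heq : (Real.sqrt (e * (b - t)))⁻¹ = (Real.sqrt e)⁻¹ * (b - t) ^ (-(1/2) : ℝ) := by
      rw [Real.sqrt_mul he.le, mul_inv, Real.rpow_neg hta.le, Real.sqrt_eq_rpow,
        Real.sqrt_eq_rpow]
    rw [Real.norm_eq_abs, abs_of_nonneg (by positivity)]
    rw [heq] at key; exact key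

lemma mvt_ge {g dg : ℝ → ℝ} (hg : ∀ t, HasDerivAt g (dg t) t) {lo hi d : ℝ}
    (hbd : ∀ x ∈ Icc lo hi, d ≤ dg x) {x y : ℝ} (hx : x ∈ Icc lo hi)
    (hy : y ∈ Icc lo hi) (hxy : x ≤ y) : d * (y - x) ≤ g y - g x := by
  rcases eq_or_lt_of_le hxy with rfl | hlt
  · simp
  · obtain ⟨c, hc, hceq⟩ := exists_hasDerivAt_eq_slope g dg hlt
      (fun t _ => (hg t).continuousAt.continuousWithinAt) (fun t _ => hg t)
    have hcmem : c ∈ Icc lo hi := ⟨le_trans hx.1 hc.1.le, le_trans hc.2.le hy.2⟩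
    have := hbd c hcmem
    rw [hceq] at this
    have hyx : 0 < y - x := sub_pos.2 hlt
    calc d * (y - x) ≤ (g y - g x) / (y - x) * (y - x) := by
          apply mul_le_mul_of_nonneg_right this hyx.le
      _ = g y - g x := div_mul_cancel₀ _ hyx.ne'

lemma core_hasDerivAt {q : ℝ → ℝ} (hq : Continuous q) {a b : ℝ} (hab : a ≤ b)
    (hqpos : ∀ t ∈ Ioo a b, 0 < q t)
    (hint : IntegrableOn (fun t => (Real.sqrt (q t))⁻¹) (Ioo a b)) :
    HasDerivAt (fun s => ∫ t in a..b, Real.sqrt (q t - s))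
      (-(∫ t in a..b, (Real.sqrt (q t))⁻¹) / 2) 0 := by
  have hcont : ∀ s : ℝ, Continuous (fun t => Real.sqrt (q t - s)) := fun s =>
    Real.continuous_sqrt.comp (hq.sub continuous_const)
  have hIoo : ∀ s : ℝ, IntegrableOn (fun t => Real.sqrt (q t - s)) (Ioo a b) := fun s =>
    ((hcont s).integrableOn_Icc).mono_set Ioo_subset_Icc_self
  have hIoo0 : IntegrableOn (fun t => Real.sqrt (q t)) (Ioo a b) := by
    simpa using hIoo 0
  have hconv : ∀ s : ℝ, (∫ t in a..b, Real.sqrt (q t - s))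
      = ∫ t in Ioo a b, Real.sqrt (q t - s) := fun s => by
    rw [intervalIntegral.integral_of_le hab, integral_Ioc_eq_integral_Ioo]
  have hIconv : (∫ t in a..b, (Real.sqrt (q t))⁻¹)
      = ∫ t in Ioo a b, (Real.sqrt (q t))⁻¹ := by
    rw [intervalIntegral.integral_of_le hab, integral_Ioc_eq_integral_Ioo]
  rw [hasDerivAt_iff_tendsto_slope]
  have hdct : Tendsto (fun s : ℝ => ∫ t in Ioo a b,
        (Real.sqrt (q t - s) - Real.sqrt (q t)) / s)
      (nhdsWithin (0:ℝ) {(0:ℝ)}ᶜ)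
      (nhds (∫ t in Ioo a b, -(Real.sqrt (q t))⁻¹ / 2)) := by
    apply tendsto_integral_filter_of_dominated_convergence
      (fun t => (Real.sqrt (q t))⁻¹)
    · exact Filter.Eventually.of_forall fun s =>
        (((hcont s).sub (Real.continuous_sqrt.comp hq)).div_const s).aestronglyMeasurable
    · refine Filter.Eventually.of_forall fun s => ?_
      refine (ae_restrict_iff' measurableSet_Ioo).2
        (Filter.Eventually.of_forall fun t ht => ?_)
      have hqt : 0 < q t := hqpos t ht
      rcases eq_or_ne s 0 with rfl | hs
      · simp [Real.sqrt_nonneg]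
      · have h1 := sqrt_sub_sqrt_abs_le (a := q t - s) hqt
        have h2 : |q t - s - q t| = |s| := by rw [sub_sub_cancel_left, abs_neg]
        rw [h2] at h1
        rw [norm_div, Real.norm_eq_abs, Real.norm_eq_abs,
          div_le_iff₀ (abs_pos.2 hs)]
        calc |Real.sqrt (q t - s) - Real.sqrt (q t)| ≤ |s| / Real.sqrt (q t) := h1
          _ = (Real.sqrt (q t))⁻¹ * |s| := by rw [div_eq_inv_mul]
    · exact hint
    · refine (ae_restrict_iff' measurableSet_Ioo).2
        (Filter.Eventually.of_forall fun t ht => ?_)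
      have hqt : 0 < q t := hqpos t ht
      have hs0 : Real.sqrt (q t) ≠ 0 := ne_of_gt (Real.sqrt_pos.2 hqt)
      have h1 : HasDerivAt (fun s : ℝ => q t - s) (-1) 0 :=
        (hasDerivAt_id (0:ℝ)).const_sub (q t)
      have h2 : HasDerivAt Real.sqrt (1/(2*Real.sqrt (q t))) ((fun s : ℝ => q t - s) 0) := by
        simpa using Real.hasDerivAt_sqrt hqt.ne'
      have h3 := h2.comp 0 h1
      have h4 : HasDerivAt (fun s : ℝ => Real.sqrt (q t - s))
          (-(Real.sqrt (q t))⁻¹ / 2) 0 := by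
        have e : -(Real.sqrt (q t))⁻¹ / 2 = 1/(2*Real.sqrt (q t)) * -1 := by ring
        rw [e]; exact h3
      rw [hasDerivAt_iff_tendsto_slope] at h4
      refine h4.congr fun s => ?_
      rw [slope_def_field]
      simp
  have hlim : (∫ t in Ioo a b, -(Real.sqrt (q t))⁻¹ / 2)
      = (-∫ t in a..b, (Real.sqrt (q t))⁻¹) / 2 := by
    rw [hIconv, MeasureTheory.integral_div, MeasureTheory.integral_neg]
  rw [← hlim]
  refine hdct.congr' ?_
  refine eventually_mem_nhdsWithin.mono fun s hs => ?_
  have hs0 : s ≠ 0 := hs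
  rw [slope_def_field, hconv s, hconv 0]
  simp only [sub_zero]
  rw [MeasureTheory.integral_div, MeasureTheory.integral_sub (hIoo s) hIoo0]

set_option maxHeartbeats 2000000 in
/-- Differentiation formula for the action integral between two
consecutive simple turning points: `F(μ) = ∫_{α(μ)}^{β(μ)} √(V(t)² − μ²) dt` is
differentiable at `μ₀` with `F'(μ₀) = −μ₀·∫_{α(μ₀)}^{β(μ₀)} (V(t)² − μ₀²)^{-1/2} dt < 0`,
the singular integral being convergent. -/
theorem action_integral_hasDerivAt
    (V : ℝ → ℝ) (hV : ContDiff ℝ 1 V) (μ₀ δ : ℝ) (hμ₀ : 0 < μ₀) (hδ : 0 < δ)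
    (α β : ℝ → ℝ)
    (hα : ∀ μ ∈ Ioo (μ₀ - δ) (μ₀ + δ), DifferentiableAt ℝ α μ)
    (hβ : ∀ μ ∈ Ioo (μ₀ - δ) (μ₀ + δ), DifferentiableAt ℝ β μ)
    (hαβ : ∀ μ ∈ Ioo (μ₀ - δ) (μ₀ + δ), α μ < β μ)
    (hVα : ∀ μ ∈ Ioo (μ₀ - δ) (μ₀ + δ), (V (α μ)) ^ 2 = μ ^ 2)
    (hVβ : ∀ μ ∈ Ioo (μ₀ - δ) (μ₀ + δ), (V (β μ)) ^ 2 = μ ^ 2)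
    (hdα : ∀ μ ∈ Ioo (μ₀ - δ) (μ₀ + δ), deriv V (α μ) ≠ 0)
    (hdβ : ∀ μ ∈ Ioo (μ₀ - δ) (μ₀ + δ), deriv V (β μ) ≠ 0)
    (hpos : ∀ μ ∈ Ioo (μ₀ - δ) (μ₀ + δ), ∀ t ∈ Ioo (α μ) (β μ),
      0 < (V t) ^ 2 - μ ^ 2) :
    MeasureTheory.IntegrableOn (fun t => (Real.sqrt ((V t) ^ 2 - μ₀ ^ 2))⁻¹)
      (Ioo (α μ₀) (β μ₀)) ∧
    HasDerivAt (fun μ => ∫ t in (α μ)..(β μ), Real.sqrt ((V t) ^ 2 - μ ^ 2))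
      (-μ₀ * ∫ t in (α μ₀)..(β μ₀), (Real.sqrt ((V t) ^ 2 - μ₀ ^ 2))⁻¹) μ₀ ∧
    -μ₀ * (∫ t in (α μ₀)..(β μ₀), (Real.sqrt ((V t) ^ 2 - μ₀ ^ 2))⁻¹) < 0 := by
  have hmem : μ₀ ∈ Ioo (μ₀ - δ) (μ₀ + δ) := ⟨by linarith, by linarith⟩
  set α₀ := α μ₀ with hα₀def
  set β₀ := β μ₀ with hβ₀def
  have hab : α₀ < β₀ := hαβ μ₀ hmem
  set g : ℝ → ℝ := fun t => V t ^ 2 with hgdef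
  have hVdiff : Differentiable ℝ V := hV.differentiable one_ne_zero
  have hgd : ∀ t, HasDerivAt g (2 * V t * deriv V t) t := fun t => by
    have h := ((hVdiff t).hasDerivAt).pow 2
    simp at h
    exact h
  have hgderiv : ∀ t, deriv g t = 2 * V t * deriv V t := fun t => (hgd t).deriv
  have hgd' : ∀ t, HasDerivAt g (deriv g t) t := fun t => by
    rw [hgderiv]; exact hgd t
  have hgC : Continuous g := (hV.continuous).pow 2
  have hqC : Continuous (fun t => g t - μ₀ ^ 2) := hgC.sub continuous_const
  have hqpos : ∀ t ∈ Ioo α₀ β₀, 0 < g t - μ₀ ^ 2 := hpos μ₀ hmem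
  have hgα : g α₀ = μ₀ ^ 2 := hVα μ₀ hmem
  have hgβ : g β₀ = μ₀ ^ 2 := hVβ μ₀ hmem
  have hgderivC : Continuous (deriv g) := by
    have : deriv g = fun t => 2 * V t * deriv V t := funext hgderiv
    rw [this]
    exact (continuous_const.mul hV.continuous).mul (hV.continuous_deriv le_rfl)
  -- derivative of g at α₀ is positive
  have hVα₀ne : V α₀ ≠ 0 := by
    intro h
    rw [hgdef] at hgα
    simp only [h] at hgα
    nlinarith [hgα]
  have hVβ₀ne : V β₀ ≠ 0 := by
    intro h
    rw [hgdef] at hgβ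
    simp only [h] at hgβ
    nlinarith [hgβ]
  have hdAne : 2 * V α₀ * deriv V α₀ ≠ 0 :=
    mul_ne_zero (mul_ne_zero two_ne_zero hVα₀ne) (hdα μ₀ hmem)
  have hdBne : 2 * V β₀ * deriv V β₀ ≠ 0 :=
    mul_ne_zero (mul_ne_zero two_ne_zero hVβ₀ne) (hdβ μ₀ hmem)
  have hdAnn : 0 ≤ 2 * V α₀ * deriv V α₀ := by
    have hW : HasDerivWithinAt g (2 * V α₀ * deriv V α₀) (Ioi α₀) α₀ :=
      (hgd α₀).hasDerivWithinAt
    rw [hasDerivWithinAt_iff_tendsto_slope] at hW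
    have hdiff : Ioi α₀ \ {α₀} = Ioi α₀ :=
      diff_singleton_eq_self (fun h => lt_irrefl α₀ h)
    rw [hdiff] at hW
    refine ge_of_tendsto hW ?_
    filter_upwards [Ioo_mem_nhdsGT_of_mem ⟨le_refl α₀, hab⟩] with t ht
    rw [slope_def_field, hgα]
    have h1 : 0 < g t - μ₀ ^ 2 := hqpos t ht
    have h2 : 0 < t - α₀ := sub_pos.2 ht.1
    positivity
  have hdBnp : 2 * V β₀ * deriv V β₀ ≤ 0 := by
    have hW : HasDerivWithinAt g (2 * V β₀ * deriv V β₀) (Iio β₀) β₀ :=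
      (hgd β₀).hasDerivWithinAt
    rw [hasDerivWithinAt_iff_tendsto_slope] at hW
    have hdiff : Iio β₀ \ {β₀} = Iio β₀ :=
      diff_singleton_eq_self (fun h => lt_irrefl β₀ h)
    rw [hdiff] at hW
    refine le_of_tendsto hW ?_
    filter_upwards [Ioo_mem_nhdsLT_of_mem ⟨hab, le_refl β₀⟩] with t ht
    rw [slope_def_field, hgβ]
    have h1 : 0 < g t - μ₀ ^ 2 := hqpos t ht
    have h2 : t - β₀ < 0 := sub_neg.2 ht.2
    exact le_of_lt (div_neg_of_pos_of_neg h1 h2)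
  set d : ℝ := (2 * V α₀ * deriv V α₀) / 2 with hddef
  set e : ℝ := -(2 * V β₀ * deriv V β₀) / 2 with hedef
  have hd : 0 < d := by
    rcases lt_of_le_of_ne hdAnn (Ne.symm hdAne) with h
    rw [hddef]; linarith
  have he : 0 < e := by
    rcases lt_of_le_of_ne hdBnp hdBne with h
    rw [hedef]; linarith
  -- windows
  have hevα : ∀ᶠ x in nhds α₀, d < deriv g x := by
    have hc : ContinuousAt (deriv g) α₀ := hgderivC.continuousAt
    have heq : deriv g α₀ = 2 * V α₀ * deriv V α₀ := hgderiv α₀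
    have : d < deriv g α₀ := by rw [heq, hddef]; linarith [hd]
    exact hc.eventually (eventually_gt_nhds this)
  have hevβ : ∀ᶠ x in nhds β₀, deriv g x < -e := by
    have hc : ContinuousAt (deriv g) β₀ := hgderivC.continuousAt
    have heq : deriv g β₀ = 2 * V β₀ * deriv V β₀ := hgderiv β₀
    have : deriv g β₀ < -e := by rw [heq, hedef]; linarith [he]
    exact hc.eventually (eventually_lt_nhds this)
  rw [Metric.eventually_nhds_iff] at hevα hevβ
  obtain ⟨ε₁, hε₁, hball₁⟩ := hevα
  obtain ⟨ε₂, hε₂, hball₂⟩ := hevβ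
  set η : ℝ := min (min (ε₁/2) (ε₂/2)) ((β₀ - α₀)/3) with hηdef
  have hη : 0 < η := by
    apply lt_min (lt_min (by linarith) (by linarith))
    linarith
  have hηε₁ : η < ε₁ := lt_of_le_of_lt (le_trans (min_le_left _ _) (min_le_left _ _)) (by linarith)
  have hηε₂ : η < ε₂ := lt_of_le_of_lt (le_trans (min_le_left _ _) (min_le_right _ _)) (by linarith)
  have hηab : η ≤ (β₀ - α₀)/3 := min_le_right _ _
  have hwα : ∀ x ∈ Icc (α₀ - η) (α₀ + η), d ≤ deriv g x := by
    intro x hx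
    refine (hball₁ ?_).le
    rw [Real.dist_eq]
    have : |x - α₀| ≤ η := abs_le.2 ⟨by linarith [hx.1], by linarith [hx.2]⟩
    linarith
  have hwβ : ∀ x ∈ Icc (β₀ - η) (β₀ + η), deriv g x ≤ -e := by
    intro x hx
    refine (hball₂ ?_).le
    rw [Real.dist_eq]
    have : |x - β₀| ≤ η := abs_le.2 ⟨by linarith [hx.1], by linarith [hx.2]⟩
    linarith
  -- monotonicity on windows
  have monoα : ∀ x ∈ Icc (α₀ - η) (α₀ + η), ∀ y ∈ Icc (α₀ - η) (α₀ + η),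
      x ≤ y → d * (y - x) ≤ g y - g x := fun x hx y hy hxy => mvt_ge hgd' hwα hx hy hxy
  have monoβ : ∀ x ∈ Icc (β₀ - η) (β₀ + η), ∀ y ∈ Icc (β₀ - η) (β₀ + η),
      x ≤ y → e * (y - x) ≤ g x - g y := by
    intro x hx y hy hxy
    have := mvt_ge (g := fun t => -g t) (dg := fun t => -deriv g t)
      (fun t => (hgd' t).neg) (lo := β₀ - η) (hi := β₀ + η) (d := e)
      (fun z hz => by have := hwβ z hz; show e ≤ -deriv g z; linarith) hx hy hxy
    linarith [this]
  -- Part 1: integrability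
  have hInt : IntegrableOn (fun t => (Real.sqrt (V t ^ 2 - μ₀ ^ 2))⁻¹) (Ioo α₀ β₀) := by
    have hc₁c₂ : α₀ + η ≤ β₀ - η := by linarith
    have hL : IntegrableOn (fun t => (Real.sqrt (V t ^ 2 - μ₀ ^ 2))⁻¹) (Ioc α₀ (α₀ + η)) := by
      apply integrableOn_inv_sqrt_left hqC (by linarith) hd
      intro t ht
      have h1 : α₀ ∈ Icc (α₀ - η) (α₀ + η) := ⟨by linarith, by linarith⟩
      have h2 : t ∈ Icc (α₀ - η) (α₀ + η) := ⟨by linarith [ht.1], ht.2⟩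
      have := monoα α₀ h1 t h2 ht.1.le
      show d * (t - α₀) ≤ g t - μ₀ ^ 2
      rw [← hgα]; exact this
    have hMid : IntegrableOn (fun t => (Real.sqrt (V t ^ 2 - μ₀ ^ 2))⁻¹)
        (Icc (α₀ + η) (β₀ - η)) := by
      apply ContinuousOn.integrableOn_compact isCompact_Icc
      apply ContinuousOn.inv₀ ((Real.continuous_sqrt.comp hqC).continuousOn)
      intro t ht
      refine ne_of_gt (Real.sqrt_pos.2 (hqpos t ⟨?_, ?_⟩))
      · linarith [ht.1]
      · linarith [ht.2]
    have hR : IntegrableOn (fun t => (Real.sqrt (V t ^ 2 - μ₀ ^ 2))⁻¹) (Ico (β₀ - η) β₀) := by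
      apply integrableOn_inv_sqrt_right hqC (by linarith) he
      intro t ht
      have h1 : β₀ ∈ Icc (β₀ - η) (β₀ + η) := ⟨by linarith, by linarith⟩
      have h2 : t ∈ Icc (β₀ - η) (β₀ + η) := ⟨ht.1, by linarith [ht.2]⟩
      have := monoβ t h2 β₀ h1 ht.2.le
      show e * (β₀ - t) ≤ g t - μ₀ ^ 2
      rw [← hgβ]; exact this
    have hsub : Ioo α₀ β₀ ⊆ Ioc α₀ (α₀ + η) ∪ (Icc (α₀ + η) (β₀ - η) ∪ Ico (β₀ - η) β₀) := by
      intro t ht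
      rcases le_or_gt t (α₀ + η) with h1 | h1
      · exact Or.inl ⟨ht.1, h1⟩
      rcases le_or_gt t (β₀ - η) with h2 | h2
      · exact Or.inr (Or.inl ⟨h1.le, h2⟩)
      · exact Or.inr (Or.inr ⟨h2.le, ht.2⟩)
    exact ((hL.union (hMid.union hR)).mono_set hsub)
  have hii : IntervalIntegrable (fun t => (Real.sqrt (V t ^ 2 - μ₀ ^ 2))⁻¹)
      MeasureTheory.volume α₀ β₀ :=
    (intervalIntegrable_iff_integrableOn_Ioc_of_le hab.le).2
      ((integrableOn_Ioc_iff_integrableOn_Ioo (by simp)).2 hInt)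
  refine ⟨hInt, ?_, ?_⟩
  · -- HasDerivAt
    have hN := core_hasDerivAt (q := fun t => V t ^ 2 - μ₀ ^ 2) hqC hab.le hqpos hInt
    have hzero : ((fun μ : ℝ => μ ^ 2 - μ₀ ^ 2) μ₀) = 0 := by simp
    have hN' : HasDerivAt (fun s => ∫ t in α₀..β₀, Real.sqrt (V t ^ 2 - μ₀ ^ 2 - s))
        (-(∫ t in α₀..β₀, (Real.sqrt (V t ^ 2 - μ₀ ^ 2))⁻¹) / 2)
        ((fun μ : ℝ => μ ^ 2 - μ₀ ^ 2) μ₀) := by rw [hzero]; exact hN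
    have hpar : HasDerivAt (fun μ : ℝ => μ ^ 2 - μ₀ ^ 2) (2 * μ₀) μ₀ := by
      simpa using (hasDerivAt_pow 2 μ₀).sub_const (μ₀ ^ 2)
    have hM2 : HasDerivAt (fun μ => ∫ t in α₀..β₀, Real.sqrt (V t ^ 2 - μ ^ 2))
        (-(∫ t in α₀..β₀, (Real.sqrt (V t ^ 2 - μ₀ ^ 2))⁻¹) / 2 * (2 * μ₀)) μ₀ := by
      have hcomp := hN'.comp μ₀ hpar
      have heqf : (fun μ : ℝ => ∫ t in α₀..β₀, Real.sqrt (V t ^ 2 - μ ^ 2))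
          = ((fun s => ∫ t in α₀..β₀, Real.sqrt (V t ^ 2 - μ₀ ^ 2 - s))
            ∘ (fun μ : ℝ => μ ^ 2 - μ₀ ^ 2)) := by
        funext μ
        simp only [Function.comp]
        exact intervalIntegral.integral_congr fun t _ => by congr 1; ring
      rw [heqf]
      exact hcomp
    have hRd : HasDerivAt (fun μ => (∫ t in (α μ)..(β μ), Real.sqrt (V t ^ 2 - μ ^ 2))
        - ∫ t in α₀..β₀, Real.sqrt (V t ^ 2 - μ ^ 2)) 0 μ₀ := by
      set C : ℝ := (1/d + 1/e) * ((2*μ₀+1) * Real.sqrt (2*μ₀+1)) with hCdef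
      rw [hasDerivAt_iff_tendsto_slope]
      apply squeeze_zero_norm' (a := fun μ => C * Real.sqrt |μ - μ₀|)
      · have hst₁ : α ⁻¹' (Icc (α₀ - η) (α₀ + η)) ∈ nhds μ₀ :=
          (hα μ₀ hmem).continuousAt.preimage_mem_nhds
            (Icc_mem_nhds (by linarith) (by linarith))
        have hst₂ : β ⁻¹' (Icc (β₀ - η) (β₀ + η)) ∈ nhds μ₀ :=
          (hβ μ₀ hmem).continuousAt.preimage_mem_nhds
            (Icc_mem_nhds (by linarith) (by linarith))
        filter_upwards [nhdsWithin_le_nhds (isOpen_Ioo.mem_nhds hmem),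
          nhdsWithin_le_nhds hst₁, nhdsWithin_le_nhds hst₂,
          nhdsWithin_le_nhds (Metric.ball_mem_nhds μ₀ one_pos),
          self_mem_nhdsWithin] with μ hμδ hμα hμβ hμ1 hμne
        have hμne' : μ ≠ μ₀ := hμne
        have hμα' : α μ ∈ Icc (α₀ - η) (α₀ + η) := hμα
        have hμβ' : β μ ∈ Icc (β₀ - η) (β₀ + η) := hμβ
        have hμ1' : |μ - μ₀| ≤ 1 := by
          have := mem_ball_iff_norm.1 hμ1
          rw [Real.norm_eq_abs] at this
          linarith
        have hgαμ : g (α μ) = μ ^ 2 := hVα μ hμδ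
        have hgβμ : g (β μ) = μ ^ 2 := hVβ μ hμδ
        have hw0 : (0:ℝ) ≤ |μ ^ 2 - μ₀ ^ 2| := abs_nonneg _
        have hcμ : Continuous (fun t => Real.sqrt (V t ^ 2 - μ ^ 2)) :=
          Real.continuous_sqrt.comp ((hV.continuous.pow 2).sub continuous_const)
        have hiiμ : ∀ (x y : ℝ), IntervalIntegrable (fun t => Real.sqrt (V t ^ 2 - μ ^ 2))
            MeasureTheory.volume x y := fun x y => hcμ.intervalIntegrable x y
        have hneg_le : -(μ ^ 2 - μ₀ ^ 2) ≤ |μ ^ 2 - μ₀ ^ 2| := neg_le_abs _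
        have hle_abs : μ ^ 2 - μ₀ ^ 2 ≤ |μ ^ 2 - μ₀ ^ 2| := le_abs_self _
        -- A-side bound
        have hαbd : ‖∫ t in (α μ)..α₀, Real.sqrt (V t ^ 2 - μ ^ 2)‖
            ≤ Real.sqrt |μ ^ 2 - μ₀ ^ 2| * (|μ ^ 2 - μ₀ ^ 2| / d) := by
          have hg_le : ∀ x ∈ Set.uIoc (α μ) α₀, ‖Real.sqrt (V x ^ 2 - μ ^ 2)‖
              ≤ Real.sqrt |μ ^ 2 - μ₀ ^ 2| := by
            intro x hx
            have hxw : V x ^ 2 - μ ^ 2 ≤ |μ ^ 2 - μ₀ ^ 2| := by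
              show g x - μ ^ 2 ≤ |μ ^ 2 - μ₀ ^ 2|
              rcases le_total (α μ) α₀ with hle | hle
              · rw [uIoc_of_le hle] at hx
                have hx1 : x ∈ Icc (α₀ - η) (α₀ + η) :=
                  ⟨by linarith [hx.1, hμα'.1], by linarith [hx.2]⟩
                have hm := monoα x hx1 α₀ ⟨by linarith, by linarith⟩ hx.2
                have h0 : 0 ≤ d * (α₀ - x) := mul_nonneg hd.le (by linarith [hx.2])
                have hgx : g x ≤ μ₀ ^ 2 := by rw [← hgα]; linarith
                linarith
              · rw [uIoc_comm, uIoc_of_le hle] at hx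
                have hx1 : x ∈ Icc (α₀ - η) (α₀ + η) :=
                  ⟨by linarith [hx.1], by linarith [hx.2, hμα'.2]⟩
                have hm := monoα x hx1 (α μ) hμα' hx.2
                have h0 : 0 ≤ d * (α μ - x) := mul_nonneg hd.le (by linarith [hx.2])
                have hgx : g x ≤ μ ^ 2 := by rw [← hgαμ]; linarith
                linarith
            rw [Real.norm_eq_abs, abs_of_nonneg (Real.sqrt_nonneg _)]
            exact Real.sqrt_le_sqrt hxw
          have h1 := intervalIntegral.norm_integral_le_of_norm_le_const hg_le
          have hdist : |α₀ - α μ| ≤ |μ ^ 2 - μ₀ ^ 2| / d := by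
            rw [le_div_iff₀ hd]
            rcases le_total (α μ) α₀ with hle | hle
            · have hm := monoα (α μ) hμα' α₀ ⟨by linarith, by linarith⟩ hle
              rw [hgα, hgαμ] at hm
              rw [abs_of_nonneg (by linarith)]
              nlinarith
            · have hm := monoα α₀ ⟨by linarith, by linarith⟩ (α μ) hμα' hle
              rw [hgα, hgαμ] at hm
              rw [abs_of_nonpos (by linarith)]
              nlinarith
          calc ‖∫ t in (α μ)..α₀, Real.sqrt (V t ^ 2 - μ ^ 2)‖
              ≤ Real.sqrt |μ ^ 2 - μ₀ ^ 2| * |α₀ - α μ| := h1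
            _ ≤ Real.sqrt |μ ^ 2 - μ₀ ^ 2| * (|μ ^ 2 - μ₀ ^ 2| / d) :=
              mul_le_mul_of_nonneg_left hdist (Real.sqrt_nonneg _)
        -- B-side bound
        have hβbd : ‖∫ t in β₀..(β μ), Real.sqrt (V t ^ 2 - μ ^ 2)‖
            ≤ Real.sqrt |μ ^ 2 - μ₀ ^ 2| * (|μ ^ 2 - μ₀ ^ 2| / e) := by
          have hg_le : ∀ x ∈ Set.uIoc β₀ (β μ), ‖Real.sqrt (V x ^ 2 - μ ^ 2)‖
              ≤ Real.sqrt |μ ^ 2 - μ₀ ^ 2| := by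
            intro x hx
            have hxw : V x ^ 2 - μ ^ 2 ≤ |μ ^ 2 - μ₀ ^ 2| := by
              show g x - μ ^ 2 ≤ |μ ^ 2 - μ₀ ^ 2|
              rcases le_total β₀ (β μ) with hle | hle
              · rw [uIoc_of_le hle] at hx
                have hx1 : x ∈ Icc (β₀ - η) (β₀ + η) :=
                  ⟨by linarith [hx.1], by linarith [hx.2, hμβ'.2]⟩
                have hm := monoβ β₀ ⟨by linarith, by linarith⟩ x hx1 hx.1.le
                have h0 : 0 ≤ e * (x - β₀) := mul_nonneg he.le (by linarith [hx.1])
                have hgx : g x ≤ μ₀ ^ 2 := by rw [← hgβ]; linarith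
                linarith
              · rw [uIoc_comm, uIoc_of_le hle] at hx
                have hx1 : x ∈ Icc (β₀ - η) (β₀ + η) :=
                  ⟨by linarith [hx.1, hμβ'.1], by linarith [hx.2]⟩
                have hm := monoβ (β μ) hμβ' x hx1 hx.1.le
                have h0 : 0 ≤ e * (x - β μ) := mul_nonneg he.le (by linarith [hx.1])
                have hgx : g x ≤ μ ^ 2 := by rw [← hgβμ]; linarith
                linarith
            rw [Real.norm_eq_abs, abs_of_nonneg (Real.sqrt_nonneg _)]
            exact Real.sqrt_le_sqrt hxw
          have h1 := intervalIntegral.norm_integral_le_of_norm_le_const hg_le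
          have hdist : |β μ - β₀| ≤ |μ ^ 2 - μ₀ ^ 2| / e := by
            rw [le_div_iff₀ he]
            rcases le_total β₀ (β μ) with hle | hle
            · have hm := monoβ β₀ ⟨by linarith, by linarith⟩ (β μ) hμβ' hle
              rw [hgβ, hgβμ] at hm
              rw [abs_of_nonneg (by linarith)]
              nlinarith
            · have hm := monoβ (β μ) hμβ' β₀ ⟨by linarith, by linarith⟩ hle
              rw [hgβ, hgβμ] at hm
              rw [abs_of_nonpos (by linarith)]
              nlinarith
          calc ‖∫ t in β₀..(β μ), Real.sqrt (V t ^ 2 - μ ^ 2)‖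
              ≤ Real.sqrt |μ ^ 2 - μ₀ ^ 2| * |β μ - β₀| := h1
            _ ≤ Real.sqrt |μ ^ 2 - μ₀ ^ 2| * (|μ ^ 2 - μ₀ ^ 2| / e) :=
              mul_le_mul_of_nonneg_left hdist (Real.sqrt_nonneg _)
        -- split
        have hsplit : (∫ t in (α μ)..(β μ), Real.sqrt (V t ^ 2 - μ ^ 2))
            - (∫ t in α₀..β₀, Real.sqrt (V t ^ 2 - μ ^ 2))
            = (∫ t in (α μ)..α₀, Real.sqrt (V t ^ 2 - μ ^ 2))
              + ∫ t in β₀..(β μ), Real.sqrt (V t ^ 2 - μ ^ 2) := by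
          have e1 := intervalIntegral.integral_add_adjacent_intervals
            (hiiμ (α μ) α₀) (hiiμ α₀ (β μ))
          have e2 := intervalIntegral.integral_add_adjacent_intervals
            (hiiμ α₀ β₀) (hiiμ β₀ (β μ))
          linarith [e1, e2]
        have hD : (0:ℝ) < |μ - μ₀| := abs_pos.2 (sub_ne_zero.2 hμne')
        have hw1 : |μ ^ 2 - μ₀ ^ 2| ≤ (2*μ₀+1) * |μ - μ₀| := by
          have hfac : μ ^ 2 - μ₀ ^ 2 = (μ - μ₀) * (μ + μ₀) := by ring
          rw [hfac, abs_mul, mul_comm]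
          apply mul_le_mul_of_nonneg_right ?_ (abs_nonneg _)
          calc |μ + μ₀| = |(μ - μ₀) + 2*μ₀| := by ring_nf
            _ ≤ |μ - μ₀| + |2*μ₀| := abs_add_le _ _
            _ ≤ 2*μ₀ + 1 := by rw [abs_of_pos (by linarith : (0:ℝ) < 2*μ₀)]; linarith
        have hw2 : Real.sqrt |μ ^ 2 - μ₀ ^ 2|
            ≤ Real.sqrt (2*μ₀+1) * Real.sqrt |μ - μ₀| := by
          rw [← Real.sqrt_mul (by linarith)]
          exact Real.sqrt_le_sqrt hw1
        have hRb : |(∫ t in (α μ)..(β μ), Real.sqrt (V t ^ 2 - μ ^ 2))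
            - ∫ t in α₀..β₀, Real.sqrt (V t ^ 2 - μ ^ 2)|
            ≤ C * Real.sqrt |μ - μ₀| * |μ - μ₀| := by
          rw [hsplit]
          calc |(∫ t in (α μ)..α₀, Real.sqrt (V t ^ 2 - μ ^ 2))
                + ∫ t in β₀..(β μ), Real.sqrt (V t ^ 2 - μ ^ 2)|
              ≤ ‖∫ t in (α μ)..α₀, Real.sqrt (V t ^ 2 - μ ^ 2)‖
                + ‖∫ t in β₀..(β μ), Real.sqrt (V t ^ 2 - μ ^ 2)‖ := abs_add_le _ _
            _ ≤ Real.sqrt |μ ^ 2 - μ₀ ^ 2| * (|μ ^ 2 - μ₀ ^ 2| / d)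
                + Real.sqrt |μ ^ 2 - μ₀ ^ 2| * (|μ ^ 2 - μ₀ ^ 2| / e) :=
              add_le_add hαbd hβbd
            _ = Real.sqrt |μ ^ 2 - μ₀ ^ 2| * |μ ^ 2 - μ₀ ^ 2| * (1/d + 1/e) := by ring
            _ ≤ (Real.sqrt (2*μ₀+1) * Real.sqrt |μ - μ₀|) * ((2*μ₀+1) * |μ - μ₀|)
                * (1/d + 1/e) := by
              apply mul_le_mul_of_nonneg_right ?_ (by positivity)
              exact mul_le_mul hw2 hw1 hw0 (by positivity)
            _ = C * Real.sqrt |μ - μ₀| * |μ - μ₀| := by rw [hCdef]; ring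
        have hf0 : (∫ t in (α μ₀)..(β μ₀), Real.sqrt (V t ^ 2 - μ₀ ^ 2))
            - (∫ t in α₀..β₀, Real.sqrt (V t ^ 2 - μ₀ ^ 2)) = 0 := by
          rw [← hα₀def, ← hβ₀def, sub_self]
        rw [slope_def_field, hf0, sub_zero, norm_div, Real.norm_eq_abs, Real.norm_eq_abs,
          div_le_iff₀ hD]
        exact hRb
      · have hcont2 : Continuous (fun μ : ℝ => C * Real.sqrt |μ - μ₀|) :=
          continuous_const.mul (Real.continuous_sqrt.comp
            (continuous_abs.comp (continuous_id.sub continuous_const)))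
        have h0 : Tendsto (fun μ : ℝ => C * Real.sqrt |μ - μ₀|) (nhds μ₀)
            (nhds (C * Real.sqrt |μ₀ - μ₀|)) := hcont2.tendsto μ₀
        have h0' := h0.mono_left (nhdsWithin_le_nhds (s := {μ₀}ᶜ))
        simpa using h0'
    have hsum := hM2.add hRd
    have heqF : (fun μ => (∫ t in α₀..β₀, Real.sqrt (V t ^ 2 - μ ^ 2))
        + ((∫ t in (α μ)..(β μ), Real.sqrt (V t ^ 2 - μ ^ 2))
          - ∫ t in α₀..β₀, Real.sqrt (V t ^ 2 - μ ^ 2)))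
        = fun μ => ∫ t in (α μ)..(β μ), Real.sqrt (V t ^ 2 - μ ^ 2) :=
      funext fun μ => by ring
    have hval : -(∫ t in α₀..β₀, (Real.sqrt (V t ^ 2 - μ₀ ^ 2))⁻¹) / 2 * (2 * μ₀) + 0
        = -μ₀ * ∫ t in α₀..β₀, (Real.sqrt (V t ^ 2 - μ₀ ^ 2))⁻¹ := by ring
    simp only [Pi.add_def] at hsum
    rw [heqF, hval] at hsum
    exact hsum
  · have hIpos : 0 < ∫ t in α₀..β₀, (Real.sqrt (V t ^ 2 - μ₀ ^ 2))⁻¹ :=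
      intervalIntegral.intervalIntegral_pos_of_pos_on hii
        (fun x hx => inv_pos.2 (Real.sqrt_pos.2 (hqpos x hx))) hab
    nlinarith [mul_pos hμ₀ hIpos]
end
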